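/- If the Finsler structure F on U ⊆ ℝⁿ is Riemannian, i.e., F(x,v) = √(h_x(v,v)) for a Riemannian metric h on U (a continuous field of positive definite symmetric bilinear forms), then the Binet-Legendre metric of F coincides with h: the inverse of the matrix g^{ij}(x) = ((n+2)/λⁿ(Ω_x)) ∫_{Ω_x} vᵢvⱼ dv equals the matrix of h_x. -/

import Mathlib

open Set MeasureTheory Metric Matrix

variable {n : ℕ}

lemma integrableOn_coord_mul (i j : Fin n) :
    IntegrableOn (fun w : EuclideanSpace ℝ (Fin n) => w i * w j)
      (ball (0 : EuclideanSpace ℝ (Fin n)) 1) volume := by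
  have hc : Continuous (fun w : EuclideanSpace ℝ (Fin n) => w i * w j) :=
    ((EuclideanSpace.proj i).continuous.mul (EuclideanSpace.proj j).continuous)
  exact ((hc.continuousOn).integrableOn_compact (isCompact_closedBall _ _)).mono_set
    ball_subset_closedBall

lemma moment_off_diag {i j : Fin n} (hij : i ≠ j) :
    ∫ w in ball (0 : EuclideanSpace ℝ (Fin n)) 1, w i * w j = 0 := by
  classical
  set e : EuclideanSpace ℝ (Fin n) ≃ₗᵢ[ℝ] EuclideanSpace ℝ (Fin n) :=
    LinearIsometryEquiv.piLpCongrRight 2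
      (fun k => if k = i then LinearIsometryEquiv.neg ℝ else LinearIsometryEquiv.refl ℝ ℝ) with he
  have hpre : e ⁻¹' (ball 0 1) = ball 0 1 := by
    rw [e.preimage_ball, e.symm.map_zero]
  have happ : ∀ (w : EuclideanSpace ℝ (Fin n)) (k : Fin n),
      e w k = if k = i then -(w k) else w k := by
    intro w k
    by_cases hk : k = i
    · subst hk; simp [he]
    · simp [he, hk]
  have key := (e.measurePreserving).setIntegral_preimage_emb
    (e.toHomeomorph.measurableEmbedding)
    (fun w : EuclideanSpace ℝ (Fin n) => w i * w j) (ball 0 1)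
  rw [hpre] at key
  have heq : ∀ w : EuclideanSpace ℝ (Fin n), e w i * e w j = -(w i * w j) := by
    intro w
    rw [happ, happ, if_pos rfl, if_neg hij.symm]
    ring
  simp only [heq] at key
  rw [integral_neg] at key
  linarith

lemma moment_diag_eq (i j : Fin n) :
    ∫ w in ball (0 : EuclideanSpace ℝ (Fin n)) 1, w i * w i
      = ∫ w in ball (0 : EuclideanSpace ℝ (Fin n)) 1, w j * w j := by
  classical
  set e : EuclideanSpace ℝ (Fin n) ≃ₗᵢ[ℝ] EuclideanSpace ℝ (Fin n) :=
    LinearIsometryEquiv.piLpCongrLeft 2 ℝ ℝ (Equiv.swap i j) with he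
  have hpre : e ⁻¹' (ball 0 1) = ball 0 1 := by
    rw [e.preimage_ball, e.symm.map_zero]
  have happ : ∀ (w : EuclideanSpace ℝ (Fin n)), e w i = w j := by
    intro w
    simp [he, Equiv.piCongrLeft'_apply]
  have key := (e.measurePreserving).setIntegral_preimage_emb
    (e.toHomeomorph.measurableEmbedding)
    (fun w : EuclideanSpace ℝ (Fin n) => w i * w i) (ball 0 1)
  rw [hpre] at key
  simp only [happ] at key
  exact key.symm

lemma sum_moment_diag (hn : 0 < n) :
    (n : ℝ) * ∫ w in ball (0 : EuclideanSpace ℝ (Fin n)) 1, w ⟨0, hn⟩ * w ⟨0, hn⟩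
      = ∫ w in ball (0 : EuclideanSpace ℝ (Fin n)) 1, ‖w‖ ^ 2 := by
  have h1 : ∀ w : EuclideanSpace ℝ (Fin n), ‖w‖ ^ 2 = ∑ k, w k * w k := by
    intro w
    rw [EuclideanSpace.norm_eq, Real.sq_sqrt (by positivity)]
    exact Finset.sum_congr rfl fun k _ => by rw [Real.norm_eq_abs, sq_abs, sq]
  simp only [h1]
  rw [integral_finset_sum _ (fun k _ => integrableOn_coord_mul k k)]
  rw [Finset.sum_congr rfl fun k _ => moment_diag_eq k ⟨0, hn⟩, Finset.sum_const,
    Finset.card_univ, Fintype.card_fin, nsmul_eq_mul]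

lemma integral_norm_sq_ball (hn : 0 < n) :
    ∫ w in ball (0 : EuclideanSpace ℝ (Fin n)) 1, ‖w‖ ^ 2
      = n * (volume (ball (0 : EuclideanSpace ℝ (Fin n)) 1)).toReal / (n + 2) := by
  haveI : Nonempty (Fin n) := ⟨⟨0, hn⟩⟩
  haveI : Nontrivial (EuclideanSpace ℝ (Fin n)) := inferInstance
  set f : ℝ → ℝ := (Iio 1).indicator (fun y => y ^ 2) with hf
  have h1 : ∫ w in ball (0 : EuclideanSpace ℝ (Fin n)) 1, ‖w‖ ^ 2
      = ∫ x : EuclideanSpace ℝ (Fin n), f ‖x‖ := by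
    rw [← integral_indicator measurableSet_ball]
    congr 1
    funext x
    by_cases hx : x ∈ ball (0 : EuclideanSpace ℝ (Fin n)) 1
    · rw [Set.indicator_of_mem hx, hf, Set.indicator_of_mem (show ‖x‖ ∈ Iio (1:ℝ) from mem_ball_zero_iff.mp hx)]
    · rw [Set.indicator_of_notMem hx, hf,
        Set.indicator_of_notMem (show ‖x‖ ∉ Iio (1:ℝ) from fun hc => hx (mem_ball_zero_iff.mpr hc))]
  rw [h1, integral_fun_norm_addHaar volume f, finrank_euclideanSpace_fin]
  have h2 : ∀ y : ℝ, y ^ (n - 1) • f y = (Iio 1).indicator (fun y => y ^ (n + 1)) y := by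
    intro y
    by_cases hy : y ∈ Iio (1 : ℝ)
    · rw [hf, Set.indicator_of_mem hy, Set.indicator_of_mem hy, smul_eq_mul, ← pow_add]
      congr 1
      omega
    · rw [hf, Set.indicator_of_notMem hy, Set.indicator_of_notMem hy, smul_zero]
  simp only [h2]
  rw [setIntegral_indicator measurableSet_Iio, Ioi_inter_Iio,
    ← integral_Ioc_eq_integral_Ioo, ← intervalIntegral.integral_of_le zero_le_one,
    integral_pow]
  rw [one_pow, zero_pow (by omega), nsmul_eq_mul, smul_eq_mul]
  push_cast
  simp only [measureReal_def]
  ring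

lemma moment_ball (hn : 0 < n) (i j : Fin n) :
    ∫ w in ball (0 : EuclideanSpace ℝ (Fin n)) 1, w i * w j
      = if i = j then (volume (ball (0 : EuclideanSpace ℝ (Fin n)) 1)).toReal / (n + 2) else 0 := by
  by_cases hij : i = j
  · subst hij
    rw [if_pos rfl, moment_diag_eq i ⟨0, hn⟩]
    have := sum_moment_diag hn
    rw [integral_norm_sq_ball hn] at this
    have hn2 : (n : ℝ) ≠ 0 := Nat.cast_ne_zero.mpr hn.ne'
    field_simp at this ⊢
    simp only [sq] at this ⊢
    have h4 := mul_left_cancel₀ hn2 (show (n:ℝ) * ((∫ w : EuclideanSpace ℝ (Fin n) in ball 0 1,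
        w ⟨0, hn⟩ * w ⟨0, hn⟩) * ((n:ℝ) + 2)) = (n:ℝ) * (volume (ball (0 : EuclideanSpace ℝ (Fin n)) 1)).toReal
      from by linear_combination (n:ℝ) * this)
    linarith
  · rw [if_neg hij]
    exact moment_off_diag hij

variable {n : ℕ}

lemma quad_eq_dot (M : Matrix (Fin n) (Fin n) ℝ) (v : Fin n → ℝ) :
    (∑ i, ∑ j, v i * (M i j * v j)) = v ⬝ᵥ (M *ᵥ v) := by
  simp [dotProduct, Matrix.mulVec, Finset.mul_sum]

lemma norm_sq_eq (w : EuclideanSpace ℝ (Fin n)) : ‖w‖ ^ 2 = ∑ k, w k * w k := by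
  rw [EuclideanSpace.norm_eq, Real.sq_sqrt (by positivity)]
  exact Finset.sum_congr rfl fun k _ => by rw [Real.norm_eq_abs, sq_abs, sq]

open scoped MatrixOrder in
lemma key_matrix (hn : 0 < n) (H : Matrix (Fin n) (Fin n) ℝ) (hH : H.PosDef) (i j : Fin n)
    (hmom : ∀ k l : Fin n, ∫ w in ball (0 : EuclideanSpace ℝ (Fin n)) 1, w k * w l
      = if k = l then (volume (ball (0 : EuclideanSpace ℝ (Fin n)) 1)).toReal / (n + 2) else 0)
    (hioc : ∀ k l : Fin n, IntegrableOn (fun w : EuclideanSpace ℝ (Fin n) => w k * w l)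
      (ball (0 : EuclideanSpace ℝ (Fin n)) 1) volume) :
    ((n + 2 : ℝ) /
        (volume {v : EuclideanSpace ℝ (Fin n) | (∑ i, ∑ j, v i * (H i j * v j)) < 1}).toReal) *
      ∫ v in {v : EuclideanSpace ℝ (Fin n) | (∑ i, ∑ j, v i * (H i j * v j)) < 1}, v i * v j
      = H⁻¹ i j := by
  classical
  set S := CFC.sqrt H with hSdef
  have hSS : S * S = H := CFC.sqrt_mul_sqrt_self H hH.posSemidef.nonneg
  have hSsym : Sᵀ = S := by
    rw [← Matrix.conjTranspose_eq_transpose_of_trivial]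
    exact (CFC.sqrt_nonneg H).posSemidef.1
  have hdetH : H.det ≠ 0 := hH.det_pos.ne'
  have hdetS : S.det ≠ 0 := fun hc => hdetH (by rw [← hSS, Matrix.det_mul, hc, mul_zero])
  have hSu : IsUnit S.det := isUnit_iff_ne_zero.mpr hdetS
  set A := S⁻¹ with hAdef
  have hAS : A * S = 1 := Matrix.nonsing_inv_mul S hSu
  have hSA : S * A = 1 := Matrix.mul_nonsing_inv S hSu
  have hAsym : Aᵀ = A := by rw [hAdef, Matrix.transpose_nonsing_inv, hSsym]
  have hAA : A * A = H⁻¹ := by rw [hAdef, ← Matrix.mul_inv_rev, hSS]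
  have hdetA : A.det ≠ 0 := by
    intro hc
    have h1 : A.det * S.det = 1 := by rw [← Matrix.det_mul, hAS, Matrix.det_one]
    rw [hc, zero_mul] at h1; exact zero_ne_one h1
  have hAHA : A * H * A = 1 := by
    rw [← hSS, show A * (S * S) * A = (A * S) * (S * A) by simp only [Matrix.mul_assoc], hAS, hSA,
      Matrix.one_mul]
  set φ : EuclideanSpace ℝ (Fin n) →ₗ[ℝ] EuclideanSpace ℝ (Fin n) := Matrix.toEuclideanLin A
    with hφdef
  set ψ : EuclideanSpace ℝ (Fin n) →ₗ[ℝ] EuclideanSpace ℝ (Fin n) := Matrix.toEuclideanLin S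
    with hψdef
  have hφ : ∀ (w : EuclideanSpace ℝ (Fin n)) (k : Fin n), φ w k = (A *ᵥ w) k := fun w k => rfl
  have hψφ : ∀ w : EuclideanSpace ℝ (Fin n), ψ (φ w) = w := by
    intro w
    ext k
    show (S *ᵥ (A *ᵥ w)) k = w k
    rw [Matrix.mulVec_mulVec, hSA, Matrix.one_mulVec]
  have hφψ : ∀ v : EuclideanSpace ℝ (Fin n), φ (ψ v) = v := by
    intro v
    ext k
    show (A *ᵥ (S *ᵥ v)) k = v k
    rw [Matrix.mulVec_mulVec, hAS, Matrix.one_mulVec]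
  have hball : ∀ w : Fin n → ℝ, (A *ᵥ w) ⬝ᵥ (H *ᵥ (A *ᵥ w)) = w ⬝ᵥ w := by
    intro w
    rw [Matrix.mulVec_mulVec, ← Matrix.vecMul_transpose, Matrix.dotProduct_mulVec,
      Matrix.vecMul_vecMul, hAsym, ← Matrix.mul_assoc, hAHA, Matrix.vecMul_one]
  have hQφ : ∀ w : EuclideanSpace ℝ (Fin n),
      (∑ i, ∑ j, (φ w) i * (H i j * (φ w) j)) = ‖w‖ ^ 2 := by
    intro w
    simp only [hφ]
    rw [quad_eq_dot H (A *ᵥ w), hball, norm_sq_eq]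
    rfl
  have hdetφ : LinearMap.det φ = A.det := by
    have hc := LinearMap.det_conj (Matrix.toLin' A) (WithLp.linearEquiv 2 ℝ (Fin n → ℝ)).symm
    rw [LinearMap.det_toLin'] at hc
    exact hc
  -- the sublevel set is the image of the unit ball
  have hΩ : {v : EuclideanSpace ℝ (Fin n) | (∑ i, ∑ j, v i * (H i j * v j)) < 1}
      = φ '' ball 0 1 := by
    ext v
    simp only [Set.mem_setOf_eq, Set.mem_image, mem_ball_zero_iff]
    constructor
    · intro hv
      refine ⟨ψ v, ?_, hφψ v⟩
      have h2 : ‖ψ v‖ ^ 2 < 1 := by rw [← hQφ (ψ v), hφψ v]; exact hv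
      exact (pow_lt_one_iff_of_nonneg (norm_nonneg _) two_ne_zero).mp h2
    · rintro ⟨w, hw, rfl⟩
      rw [hQφ w]
      exact pow_lt_one₀ (norm_nonneg _) hw two_ne_zero
  -- volume of the set
  have hvol : (volume {v : EuclideanSpace ℝ (Fin n) | (∑ i, ∑ j, v i * (H i j * v j)) < 1}).toReal
      = |A.det| * (volume (ball (0 : EuclideanSpace ℝ (Fin n)) 1)).toReal := by
    rw [hΩ, Measure.addHaar_image_linearMap, hdetφ, ENNReal.toReal_mul,
      ENNReal.toReal_ofReal (abs_nonneg _)]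
  -- change of variables in the integral
  set φL : EuclideanSpace ℝ (Fin n) →L[ℝ] EuclideanSpace ℝ (Fin n) :=
    LinearMap.toContinuousLinearMap φ with hφLdef
  have hinj : Set.InjOn φ (ball 0 1) :=
    (Function.LeftInverse.injective hψφ).injOn
  have hcov := integral_image_eq_integral_abs_det_fderiv_smul volume measurableSet_ball
    (fun w _ => (φL.hasFDerivAt.hasFDerivWithinAt :
      HasFDerivWithinAt φ φL (ball (0 : EuclideanSpace ℝ (Fin n)) 1) w))
    hinj (fun v : EuclideanSpace ℝ (Fin n) => v i * v j)
  have hdetφL : (φL : EuclideanSpace ℝ (Fin n) →L[ℝ] EuclideanSpace ℝ (Fin n)).det = A.det := by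
    rw [ContinuousLinearMap.det, ← hdetφ]; rfl
  -- compute the transformed integral
  have hint : ∫ v in {v : EuclideanSpace ℝ (Fin n) | (∑ i, ∑ j, v i * (H i j * v j)) < 1},
      v i * v j = |A.det| * ∑ k, ∑ l, (A i k * A j l) *
        ∫ w in ball (0 : EuclideanSpace ℝ (Fin n)) 1, w k * w l := by
    rw [show (⇑φL : EuclideanSpace ℝ (Fin n) → EuclideanSpace ℝ (Fin n)) = ⇑φ from rfl] at hcov
    rw [hΩ, hcov]
    have hexp : ∀ w : EuclideanSpace ℝ (Fin n),
        (φ w) i * (φ w) j = ∑ k, ∑ l, (A i k * A j l) * (w k * w l) := by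
      intro w
      rw [hφ, hφ]
      show (∑ k, A i k * w k) * (∑ l, A j l * w l) = _
      rw [Finset.sum_mul_sum]
      exact Finset.sum_congr rfl fun k _ => Finset.sum_congr rfl fun l _ => by ring
    calc ∫ w in ball (0 : EuclideanSpace ℝ (Fin n)) 1, |φL.det| • ((φ w) i * (φ w) j)
        = ∫ w in ball (0 : EuclideanSpace ℝ (Fin n)) 1,
            |A.det| • (∑ k, ∑ l, (A i k * A j l) * (w k * w l)) := by
          simp only [hdetφL, hexp]
      _ = |A.det| * ∑ k, ∑ l, (A i k * A j l) *
            ∫ w in ball (0 : EuclideanSpace ℝ (Fin n)) 1, w k * w l := by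
          rw [integral_smul, smul_eq_mul]
          congr 1
          rw [integral_finset_sum _ (fun k _ => integrable_finset_sum _
            (fun l _ => ((hioc k l).const_mul _)))]
          refine Finset.sum_congr rfl fun k _ => ?_
          rw [integral_finset_sum _ (fun l _ => ((hioc k l).const_mul _))]
          exact Finset.sum_congr rfl fun l _ => MeasureTheory.integral_const_mul _ _
  -- final computation
  have hsum : ∑ k, ∑ l, (A i k * A j l) *
      (if k = l then (volume (ball (0 : EuclideanSpace ℝ (Fin n)) 1)).toReal / (n + 2) else 0)
      = (H⁻¹ i j) * (volume (ball (0 : EuclideanSpace ℝ (Fin n)) 1)).toReal / (n + 2) := by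
    simp only [mul_ite, mul_zero, Finset.sum_ite_eq, Finset.mem_univ, if_true]
    rw [← Finset.sum_mul, mul_div_assoc,
      show (∑ k, A i k * A j k) = (A * A) i j from ?_, hAA]
    rw [Matrix.mul_apply]
    refine Finset.sum_congr rfl fun k _ => ?_
    congr 1
    rw [← Matrix.transpose_apply A k j, hAsym]
  have hVpos : 0 < (volume (ball (0 : EuclideanSpace ℝ (Fin n)) 1)).toReal :=
    ENNReal.toReal_pos (measure_ball_pos volume _ one_pos).ne' measure_ball_lt_top.ne
  simp only [hmom] at hint
  rw [hint, hsum, hvol]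
  have habs : |A.det| ≠ 0 := abs_ne_zero.mpr hdetA
  have hn2 : (n : ℝ) + 2 ≠ 0 := by positivity
  field_simp

/-- If the Finsler structure is Riemannian, `F(x,v) = √(h_x(v,v))`, then the Binet–Legendre
metric coincides with `h`: the matrix `g^{ij}(x) = ((n+2)/λⁿ(Ω_x)) ∫_{Ω_x} vᵢvⱼ dv` is the
inverse of the matrix of `h_x`. -/
theorem stmt13 {n : ℕ} (hn : 0 < n) (U : Set (EuclideanSpace ℝ (Fin n))) (hUopen : IsOpen U)
    (h : EuclideanSpace ℝ (Fin n) → Matrix (Fin n) (Fin n) ℝ)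
    (hcont : ContinuousOn h U)
    (hsymm : ∀ x ∈ U, (h x).IsSymm)
    (hposdef : ∀ x ∈ U, (h x).PosDef)
    (F : EuclideanSpace ℝ (Fin n) → EuclideanSpace ℝ (Fin n) → ℝ)
    (hF : ∀ x ∈ U, ∀ v, F x v = Real.sqrt (∑ i, ∑ j, v i * (h x i j * v j))) :
    ∀ x ∈ U,
      (Matrix.of fun i j : Fin n =>
        ((n + 2 : ℝ) / (volume {v : EuclideanSpace ℝ (Fin n) | F x v < 1}).toReal) *
          ∫ v in {v : EuclideanSpace ℝ (Fin n) | F x v < 1}, v i * v j) = (h x)⁻¹ := by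
  intro x hx
  have hset : {v : EuclideanSpace ℝ (Fin n) | F x v < 1}
      = {v : EuclideanSpace ℝ (Fin n) | (∑ i, ∑ j, v i * (h x i j * v j)) < 1} := by
    ext v
    simp only [Set.mem_setOf_eq, hF x hx v]
    rw [Real.sqrt_lt' one_pos, one_pow]
  ext i j
  rw [Matrix.of_apply, hset]
  exact key_matrix hn (h x) (hposdef x hx) i j (moment_ball hn) integrableOn_coord_mul
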